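/- Let X₁, X₂, X_c be independent random variables each with density (1/2)e^{-x/2} on (0,∞), let L₁, L₂, L_c, σ² > 0, γ₁, γ₂ ∈ (0,1) with γ₁ + γ₂ = 1, and ε₁ > 0 with γ₁/γ₂ > ε₁. Define V₁,₁ = γ₁L₁X₁/(γ₂L₁X₁ + 2σ²), V₂,₁ = γ₁L₂X₂/(γ₂L₂X₂ + 2σ²), W₁ = L_cX_c/(2σ²), and ξ = σ²ε₁/(γ₁ − ε₁γ₂). Then the outage probability of the weak user in bi-directional cooperative NOMA satisfies P{V₁,₁ < ε₁ and V₂,₁ < ε₁} + P{max{V₁,₁, W₁} < ε₁ and V₂,₁ > ε₁} = (1 − e^{−ξ/L₁})·(1 − e^{−σ²ε₁/L_c − ξ/L₂}). -/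

import Mathlib

open Real MeasureTheory Set

/-- Joint density of three independent exponential(mean 2) random variables. -/
noncomputable def dens3 (p : ℝ × ℝ × ℝ) : ℝ :=
  ((1/2) * Real.exp (-p.1/2)) * ((1/2) * Real.exp (-p.2.1/2)) * ((1/2) * Real.exp (-p.2.2/2))

lemma my_hasDeriv (x : ℝ) :
    HasDerivAt (fun x : ℝ => -Real.exp (-x/2)) ((1/2) * Real.exp (-x/2)) x := by
  have h1 : HasDerivAt (fun x : ℝ => -x/2) (-1/2) x := by
    simpa using ((hasDerivAt_id x).neg.div_const 2)
  have h3 : HasDerivAt (fun x : ℝ => -Real.exp (-x/2)) (-(Real.exp (-x/2) * (-1/2))) x :=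
    h1.exp.neg
  convert h3 using 1
  ring

lemma exp_half_int_Ioo (a b : ℝ) (h : a ≤ b) :
    ∫ x in Set.Ioo a b, (1/2) * Real.exp (-x/2) = Real.exp (-a/2) - Real.exp (-b/2) := by
  rw [← MeasureTheory.integral_Ioc_eq_integral_Ioo, ← intervalIntegral.integral_of_le h]
  rw [intervalIntegral.integral_eq_sub_of_hasDerivAt (fun x _ => my_hasDeriv x)
    (Continuous.intervalIntegrable (by continuity) a b)]
  ring

lemma exp_half_int_Ioi (b : ℝ) :
    ∫ x in Set.Ioi b, (1/2) * Real.exp (-x/2) = Real.exp (-b/2) := by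
  have hint : IntegrableOn (fun x : ℝ => (1/2) * Real.exp (-x/2)) (Set.Ioi b) := by
    have heq : (fun x : ℝ => (1/2) * Real.exp (-x/2))
        = fun x : ℝ => (1/2) * Real.exp (-(1/2) * x) := by
      funext x; congr 1; ring
    rw [heq]
    exact (exp_neg_integrableOn_Ioi b (by norm_num : (0:ℝ) < 1/2)).const_mul (1/2 : ℝ)
  have htend : Filter.Tendsto (fun x : ℝ => -Real.exp (-x/2)) Filter.atTop (nhds 0) := by
    have : Filter.Tendsto (fun x : ℝ => Real.exp (-x/2)) Filter.atTop (nhds 0) := by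
      apply Real.tendsto_exp_atBot.comp
      apply Filter.Tendsto.atBot_div_const (by norm_num : (0:ℝ) < 2)
      exact Filter.tendsto_neg_atBot_iff.mpr Filter.tendsto_id
    simpa using this.neg
  have := MeasureTheory.integral_Ioi_of_hasDerivAt_of_tendsto'
    (f := fun x : ℝ => -Real.exp (-x/2)) (f' := fun x : ℝ => (1/2) * Real.exp (-x/2))
    (fun x _ => my_hasDeriv x) hint htend
  rw [this]; ring

theorem stmt17 (L1 L2 Lc σ2 γ1 γ2 ε1 : ℝ) (hL1 : 0 < L1) (hL2 : 0 < L2) (hLc : 0 < Lc)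
    (hσ : 0 < σ2) (hγ1 : γ1 ∈ Set.Ioo (0:ℝ) 1) (hγ2 : γ2 ∈ Set.Ioo (0:ℝ) 1)
    (hsum : γ1 + γ2 = 1) (hε : 0 < ε1) (hth : ε1 < γ1 / γ2) :
    (∫ p in {p : ℝ × ℝ × ℝ | 0 < p.1 ∧ 0 < p.2.1 ∧ 0 < p.2.2 ∧
        γ1 * L1 * p.1 / (γ2 * L1 * p.1 + 2 * σ2) < ε1 ∧
        γ1 * L2 * p.2.1 / (γ2 * L2 * p.2.1 + 2 * σ2) < ε1}, dens3 p)
    + (∫ p in {p : ℝ × ℝ × ℝ | 0 < p.1 ∧ 0 < p.2.1 ∧ 0 < p.2.2 ∧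
        max (γ1 * L1 * p.1 / (γ2 * L1 * p.1 + 2 * σ2)) (Lc * p.2.2 / (2 * σ2)) < ε1 ∧
        ε1 < γ1 * L2 * p.2.1 / (γ2 * L2 * p.2.1 + 2 * σ2)}, dens3 p)
    = (1 - Real.exp (-(σ2 * ε1 / (γ1 - ε1 * γ2)) / L1)) *
      (1 - Real.exp (-(σ2 * ε1) / Lc - (σ2 * ε1 / (γ1 - ε1 * γ2)) / L2)) := by
  have hγ2p := hγ2.1
  have hk : 0 < γ1 - ε1 * γ2 := by
    rw [lt_div_iff₀ hγ2p] at hth; linarith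
  set ξ := σ2 * ε1 / (γ1 - ε1 * γ2) with hξdef
  have hξ : 0 < ξ := by positivity
  set a := 2 * ξ / L1 with hadef
  set b := 2 * ξ / L2 with hbdef
  set c := 2 * σ2 * ε1 / Lc with hcdef
  have ha : 0 < a := by positivity
  have hb : 0 < b := by positivity
  have hc : 0 < c := by positivity
  have hrw1 : a = (2 * σ2 * ε1) / (L1 * (γ1 - ε1 * γ2)) := by
    rw [hadef, hξdef]; field_simp
  have hrw2 : b = (2 * σ2 * ε1) / (L2 * (γ1 - ε1 * γ2)) := by
    rw [hbdef, hξdef]; field_simp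
  have hiff1 : ∀ x : ℝ, 0 < x →
      (γ1 * L1 * x / (γ2 * L1 * x + 2 * σ2) < ε1 ↔ x < a) := by
    intro x hx
    rw [div_lt_iff₀ (by positivity), hrw1, lt_div_iff₀ (by positivity)]
    constructor <;> intro h <;> nlinarith
  have hiff2 : ∀ x : ℝ, 0 < x →
      (γ1 * L2 * x / (γ2 * L2 * x + 2 * σ2) < ε1 ↔ x < b) := by
    intro x hx
    rw [div_lt_iff₀ (by positivity), hrw2, lt_div_iff₀ (by positivity)]
    constructor <;> intro h <;> nlinarith
  have hiff2' : ∀ x : ℝ, 0 < x →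
      (ε1 < γ1 * L2 * x / (γ2 * L2 * x + 2 * σ2) ↔ b < x) := by
    intro x hx
    rw [lt_div_iff₀ (by positivity), hrw2, div_lt_iff₀ (by positivity)]
    constructor <;> intro h <;> nlinarith
  have hiffc : ∀ z : ℝ, (Lc * z / (2 * σ2) < ε1 ↔ z < c) := by
    intro z
    rw [div_lt_iff₀ (by positivity), hcdef, lt_div_iff₀ hLc]
    constructor <;> intro h <;> nlinarith
  have hset1 : {p : ℝ × ℝ × ℝ | 0 < p.1 ∧ 0 < p.2.1 ∧ 0 < p.2.2 ∧
        γ1 * L1 * p.1 / (γ2 * L1 * p.1 + 2 * σ2) < ε1 ∧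
        γ1 * L2 * p.2.1 / (γ2 * L2 * p.2.1 + 2 * σ2) < ε1}
      = (Set.Ioo 0 a) ×ˢ ((Set.Ioo 0 b) ×ˢ (Set.Ioi (0:ℝ))) := by
    ext ⟨x, y, z⟩
    simp only [Set.mem_setOf_eq, Set.mem_prod, Set.mem_Ioo, Set.mem_Ioi]
    constructor
    · rintro ⟨hx, hy, hz, h1, h2⟩
      exact ⟨⟨hx, (hiff1 x hx).mp h1⟩, ⟨hy, (hiff2 y hy).mp h2⟩, hz⟩
    · rintro ⟨⟨hx, hx'⟩, ⟨hy, hy'⟩, hz⟩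
      exact ⟨hx, hy, hz, (hiff1 x hx).mpr hx', (hiff2 y hy).mpr hy'⟩
  have hset2 : {p : ℝ × ℝ × ℝ | 0 < p.1 ∧ 0 < p.2.1 ∧ 0 < p.2.2 ∧
        max (γ1 * L1 * p.1 / (γ2 * L1 * p.1 + 2 * σ2)) (Lc * p.2.2 / (2 * σ2)) < ε1 ∧
        ε1 < γ1 * L2 * p.2.1 / (γ2 * L2 * p.2.1 + 2 * σ2)}
      = (Set.Ioo 0 a) ×ˢ ((Set.Ioi b) ×ˢ (Set.Ioo 0 c)) := by
    ext ⟨x, y, z⟩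
    simp only [Set.mem_setOf_eq, Set.mem_prod, Set.mem_Ioo, Set.mem_Ioi, max_lt_iff]
    constructor
    · rintro ⟨hx, hy, hz, ⟨h1, h1'⟩, h2⟩
      exact ⟨⟨hx, (hiff1 x hx).mp h1⟩, (hiff2' y hy).mp h2, hz, (hiffc z).mp h1'⟩
    · rintro ⟨⟨hx, hx'⟩, hy, hz, hz'⟩
      have hy0 : 0 < y := lt_trans hb hy
      exact ⟨hx, hy0, hz, ⟨(hiff1 x hx).mpr hx', (hiffc z).mpr hz'⟩, (hiff2' y hy0).mpr hy⟩
  rw [hset1, hset2]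
  have hdens : ∀ p : ℝ × ℝ × ℝ, dens3 p =
      ((1/2) * Real.exp (-p.1/2)) *
        (((1/2) * Real.exp (-p.2.1/2)) * ((1/2) * Real.exp (-p.2.2/2))) := by
    intro p; simp only [dens3]; ring
  have hprod : ∀ (A : Set ℝ) (B : Set (ℝ × ℝ)),
      (∫ p in A ×ˢ B, dens3 p)
        = (∫ x in A, (1/2) * Real.exp (-x/2)) *
          ∫ q in B, ((1/2) * Real.exp (-q.1/2)) * ((1/2) * Real.exp (-q.2/2)) := by
    intro A B
    simp only [hdens]
    rw [MeasureTheory.Measure.volume_eq_prod, MeasureTheory.setIntegral_prod_mul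
      (f := fun x : ℝ => (1/2) * Real.exp (-x/2))
      (g := fun q : ℝ × ℝ => ((1/2) * Real.exp (-q.1/2)) * ((1/2) * Real.exp (-q.2/2)))]
  have hprod2 : ∀ (A B : Set ℝ),
      (∫ q in A ×ˢ B, ((1/2) * Real.exp (-q.1/2)) * ((1/2) * Real.exp (-q.2/2)) : ℝ)
        = (∫ x in A, (1/2) * Real.exp (-x/2)) * ∫ x in B, (1/2) * Real.exp (-x/2) := by
    intro A B
    rw [MeasureTheory.Measure.volume_eq_prod, MeasureTheory.setIntegral_prod_mul
      (f := fun x : ℝ => (1/2) * Real.exp (-x/2))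
      (g := fun x : ℝ => (1/2) * Real.exp (-x/2))]
  rw [hprod, hprod, hprod2, hprod2]
  rw [exp_half_int_Ioo 0 a ha.le, exp_half_int_Ioo 0 b hb.le, exp_half_int_Ioo 0 c hc.le,
    exp_half_int_Ioi 0, exp_half_int_Ioi b]
  have e1 : Real.exp (-a/2) = Real.exp (-ξ/L1) := by
    congr 1; rw [hadef]; ring
  have e2 : Real.exp (-b/2) = Real.exp (-ξ/L2) := by
    congr 1; rw [hbdef]; ring
  have e3 : Real.exp (-c/2) = Real.exp (-(σ2 * ε1)/Lc) := by
    congr 1; rw [hcdef]; ring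
  have e4 : Real.exp (-(σ2 * ε1) / Lc - ξ / L2)
      = Real.exp (-(σ2 * ε1)/Lc) * Real.exp (-ξ/L2) := by
    rw [← Real.exp_add]; congr 1; ring
  rw [e1, e2, e3, e4]
  simp only [neg_zero, zero_div, Real.exp_zero]
  ring
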